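/- Let γ ≥ 1, let 𝓛₀ ⊂ ℤ^γ be finite and nonempty, and let w ∈ ℝ^γ be such that Σ_{l∈𝓛₀} (lᵀw)² ≠ 0. Then lim_{t→0} t · ( Σ_{l∈𝓛₀} sin(t·lᵀw) ) / ( 2 Σ_{l∈𝓛₀} sin²(t·lᵀw/2) ) = 2 (Σ_{l∈𝓛₀} lᵀw) / (Σ_{l∈𝓛₀} (lᵀw)²). In particular, if Σ_{l∈𝓛₀} lᵀw ≠ 0, then for every ε > 0 the modulus of Φ̄(t) = i ε (Σ_{l∈𝓛₀} sin(t·lᵀw)) / (2 Σ_{l∈𝓛₀} sin²(t·lᵀw/2)) tends to +∞ as t → 0 with t ≠ 0. -/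

import Mathlib

open Filter

private lemma sin_div_lim (a : ℝ) :
    Tendsto (fun t : ℝ => Real.sin (t * a) / t) (nhdsWithin 0 {0}ᶜ) (nhds a) := by
  have h : HasDerivAt (fun t : ℝ => Real.sin (t * a)) a 0 := by
    have := (Real.hasDerivAt_sin (0 * a)).comp 0 ((hasDerivAt_id (0:ℝ)).mul_const a)
    simpa [Function.comp_def] using this
  have := hasDerivAt_iff_tendsto_slope.mp h
  refine this.congr fun t => ?_
  simp [slope_def_field]

/-- Analytic core of Proposition 3: along the ray of spatial frequencies `ξ = t w`, the
ratio `t (Σ_l sin(t lᵀw)) / (2 Σ_l sin²(t lᵀw / 2))` tends to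
`2 (Σ_l lᵀw) / (Σ_l (lᵀw)²)` as `t → 0`; hence if `Σ_l lᵀw ≠ 0` the modulus of the
sensing-error symbol `Φ̄(t) = i ε (Σ_l sin(t lᵀw)) / (2 Σ_l sin²(t lᵀw / 2))` blows up
as `t → 0`, `t ≠ 0`. -/
theorem stmt15 (γ : ℕ) (hγ : 1 ≤ γ) (L0 : Finset (Fin γ → ℤ)) (hL0ne : L0.Nonempty)
    (w : Fin γ → ℝ) (hw : (∑ l ∈ L0, (∑ j, (l j : ℝ) * w j) ^ 2) ≠ 0) :
    Tendsto (fun t : ℝ =>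
        t * (∑ l ∈ L0, Real.sin (t * ∑ j, (l j : ℝ) * w j)) /
          (2 * ∑ l ∈ L0, Real.sin (t * (∑ j, (l j : ℝ) * w j) / 2) ^ 2))
      (nhdsWithin 0 {0}ᶜ)
      (nhds (2 * (∑ l ∈ L0, ∑ j, (l j : ℝ) * w j) /
        (∑ l ∈ L0, (∑ j, (l j : ℝ) * w j) ^ 2))) ∧
    ((∑ l ∈ L0, ∑ j, (l j : ℝ) * w j) ≠ 0 → ∀ ε : ℝ, 0 < ε →
      Tendsto (fun t : ℝ =>
          ‖Complex.I * (ε : ℂ) *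
              ((∑ l ∈ L0, Real.sin (t * ∑ j, (l j : ℝ) * w j) : ℝ) : ℂ) /
              ((2 * ∑ l ∈ L0, Real.sin (t * (∑ j, (l j : ℝ) * w j) / 2) ^ 2 : ℝ) : ℂ)‖)
        (nhdsWithin 0 {0}ᶜ) atTop) := by
  classical
  set a : (Fin γ → ℤ) → ℝ := fun l => ∑ j, (l j : ℝ) * w j with ha
  set A : ℝ := ∑ l ∈ L0, a l with hA'
  set B : ℝ := ∑ l ∈ L0, a l ^ 2 with hB'
  have hB : B ≠ 0 := hw
  set S : ℝ → ℝ := fun t => ∑ l ∈ L0, Real.sin (t * a l) with hS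
  set D : ℝ → ℝ := fun t => 2 * ∑ l ∈ L0, Real.sin (t * a l / 2) ^ 2 with hD
  -- numerator / t
  have hnum : Tendsto (fun t => S t / t) (nhdsWithin 0 {0}ᶜ) (nhds A) := by
    have := tendsto_finset_sum L0 (fun l _ => sin_div_lim (a l))
    refine this.congr fun t => ?_
    rw [hS, Finset.sum_div]
  -- denominator / t²
  have hden : Tendsto (fun t => D t / t ^ 2) (nhdsWithin 0 {0}ᶜ) (nhds (B / 2)) := by
    have h1 : ∀ l ∈ L0, Tendsto (fun t : ℝ => (Real.sin (t * a l / 2) / t) ^ 2)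
        (nhdsWithin 0 {0}ᶜ) (nhds ((a l / 2) ^ 2)) := by
      intro l _
      have := (sin_div_lim (a l / 2)).pow 2
      refine this.congr fun t => ?_
      rw [mul_div_assoc]
    have hs := tendsto_finset_sum L0 h1
    have h2 := hs.const_mul (2 : ℝ)
    have heq : (2 : ℝ) * ∑ l ∈ L0, (a l / 2) ^ 2 = B / 2 := by
      rw [hB', Finset.mul_sum, Finset.sum_div]
      exact Finset.sum_congr rfl fun l _ => by ring
    rw [heq] at h2
    refine h2.congr fun t => ?_
    rw [hD]
    simp [div_pow, Finset.sum_div, mul_div_assoc]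
  -- main limit
  have hmain : Tendsto (fun t => t * S t / D t) (nhdsWithin 0 {0}ᶜ)
      (nhds (2 * A / B)) := by
    have hB2 : B / 2 ≠ 0 := by positivity
    have h := hnum.div hden hB2
    have hval : A / (B / 2) = 2 * A / B := by
      field_simp
    rw [hval] at h
    refine (h.congr' ?_)
    filter_upwards [self_mem_nhdsWithin] with t ht
    have ht0 : t ≠ 0 := ht
    rcases eq_or_ne (D t) 0 with hDt | hDt
    · simp [hDt]
    · rw [Pi.div_apply]
      field_simp
  refine ⟨hmain, ?_⟩
  intro hA ε hε
  have hc : (0 : ℝ) < ε * |2 * A / B| := by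
    have : 2 * A / B ≠ 0 := div_ne_zero (mul_ne_zero two_ne_zero hA) hB
    have := abs_pos.mpr this
    positivity
  have h1 : Tendsto (fun t => ε * |t * S t / D t|) (nhdsWithin 0 {0}ᶜ)
      (nhds (ε * |2 * A / B|)) := (hmain.abs).const_mul ε
  have h2 : Tendsto (fun t : ℝ => |t|⁻¹) (nhdsWithin 0 {0}ᶜ) atTop :=
    tendsto_inv_nhdsGT_zero.comp tendsto_abs_nhdsNE_zero
  have h3 := Tendsto.pos_mul_atTop hc h1 h2
  refine h3.congr' ?_
  filter_upwards [self_mem_nhdsWithin] with t ht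
  have ht0 : t ≠ 0 := ht
  have htabs : |t| ≠ 0 := abs_ne_zero.mpr ht0
  have hnorm : ‖Complex.I * (ε : ℂ) * ((S t : ℝ) : ℂ) / ((D t : ℝ) : ℂ)‖
      = ε * |S t| / |D t| := by
    simp [norm_div, Complex.norm_I, Complex.norm_real, Real.norm_eq_abs, abs_of_pos hε]
  show ε * |t * S t / D t| * |t|⁻¹
      = ‖Complex.I * (ε : ℂ) * ((S t : ℝ) : ℂ) / ((D t : ℝ) : ℂ)‖
  rw [hnorm]
  rw [abs_div, abs_mul]
  rcases eq_or_ne (D t) 0 with hDt | hDt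
  · simp [hDt]
  · have hDabs : |D t| ≠ 0 := abs_ne_zero.mpr hDt
    field_simp
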